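/- For any vectors x, θ in ℝ^p, any y ∈ ℝ, and any δ ≥ 0, the maximum of |y - (x + Δx)ᵀθ|² over all Δx with ‖Δx‖ ≤ δ equals (|y - xᵀθ| + δ‖θ‖_*)², where ‖·‖_* is the dual norm of ‖·‖. -/

import Mathlib

open Matrix

/-- The dual norm `‖θ‖_* = sup_{‖x‖ ≤ 1} |θᵀx|` of a norm `N` on `ℝ^p`. -/
noncomputable def dualNorm {p : ℕ} (N : (Fin p → ℝ) → ℝ) (θ : Fin p → ℝ) : ℝ :=
  sSup {v | ∃ x : Fin p → ℝ, N x ≤ 1 ∧ v = |θ ⬝ᵥ x|}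

/-- Type synonym for `Fin p → ℝ` carrying a custom norm. -/
def DualNormSyn (p : ℕ) : Type := Fin p → ℝ

instance (p : ℕ) : AddCommGroup (DualNormSyn p) :=
  inferInstanceAs (AddCommGroup (Fin p → ℝ))

noncomputable instance (p : ℕ) : Module ℝ (DualNormSyn p) :=
  inferInstanceAs (Module ℝ (Fin p → ℝ))

instance (p : ℕ) : FiniteDimensional ℝ (DualNormSyn p) :=
  inferInstanceAs (FiniteDimensional ℝ (Fin p → ℝ))

/-- The dual norm is attained on the unit ball. -/
theorem dualNorm_isGreatest {p : ℕ} (N : (Fin p → ℝ) → ℝ)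
    (hN_eq : ∀ v, N v = 0 ↔ v = 0)
    (hN_smul : ∀ (a : ℝ) v, N (a • v) = |a| * N v)
    (hN_add : ∀ v w, N (v + w) ≤ N v + N w) (θ : Fin p → ℝ) :
    IsGreatest {v | ∃ x : Fin p → ℝ, N x ≤ 1 ∧ v = |θ ⬝ᵥ x|} (dualNorm N θ) := by
  have hneg : ∀ v : Fin p → ℝ, N (-v) = N v := by
    intro v
    have := hN_smul (-1) v
    simpa using this
  let F : AddGroupNorm (DualNormSyn p) :=
    { toFun := N
      map_zero' := (hN_eq 0).mpr rfl
      add_le' := hN_add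
      neg' := hneg
      eq_zero_of_map_eq_zero' := fun v hv => (hN_eq v).mp hv }
  letI : NormedAddCommGroup (DualNormSyn p) := F.toNormedAddCommGroup
  letI : NormedSpace ℝ (DualNormSyn p) :=
    { norm_smul_le := fun a v => by
        change N (a • v) ≤ |a| * N v
        exact (hN_smul a v).le }
  have hball : IsCompact (Metric.closedBall (0 : DualNormSyn p) 1) :=
    isCompact_closedBall _ _
  have hnorm : ∀ v : DualNormSyn p, ‖v‖ = N v := fun _ => rfl
  -- the linear functional
  let L : DualNormSyn p →ₗ[ℝ] ℝ :=
    { toFun := fun v => θ ⬝ᵥ (v : Fin p → ℝ)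
      map_add' := fun a b => dotProduct_add θ a b
      map_smul' := fun a b => by
        change θ ⬝ᵥ ((a • b : Fin p → ℝ)) = a * (θ ⬝ᵥ (b : Fin p → ℝ))
        exact dotProduct_smul a θ (b : Fin p → ℝ) }
  have hLc : Continuous L := L.continuous_of_finiteDimensional
  have hfc : Continuous fun v : DualNormSyn p => |L v| := continuous_abs.comp hLc
  obtain ⟨u₀, hu₀mem, hu₀max⟩ :=
    hball.exists_isMaxOn ⟨0, by simp⟩ hfc.continuousOn
  have hmem : ∀ v : DualNormSyn p, v ∈ Metric.closedBall (0 : DualNormSyn p) 1 ↔ N v ≤ 1 := by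
    intro v
    rw [Metric.mem_closedBall, dist_zero_right, hnorm]
  have hG : IsGreatest {v | ∃ x : Fin p → ℝ, N x ≤ 1 ∧ v = |θ ⬝ᵥ x|} |θ ⬝ᵥ (u₀ : Fin p → ℝ)| := by
    constructor
    · exact ⟨u₀, (hmem u₀).mp hu₀mem, rfl⟩
    · rintro w ⟨z, hz, rfl⟩
      exact hu₀max ((hmem z).mpr hz)
  rw [dualNorm, hG.csSup_eq]
  exact hG

theorem stmt0 {p : ℕ} (N : (Fin p → ℝ) → ℝ)
    (hN_eq : ∀ v, N v = 0 ↔ v = 0)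
    (hN_smul : ∀ (a : ℝ) v, N (a • v) = |a| * N v)
    (hN_add : ∀ v w, N (v + w) ≤ N v + N w)
    (x θ : Fin p → ℝ) (y δ : ℝ) (hδ : 0 ≤ δ) :
    IsGreatest {v | ∃ Δx : Fin p → ℝ, N Δx ≤ δ ∧ v = (y - (x + Δx) ⬝ᵥ θ) ^ 2}
      ((|y - x ⬝ᵥ θ| + δ * dualNorm N θ) ^ 2) := by
  obtain ⟨⟨u₀, hu₀, hDval⟩, hub⟩ := dualNorm_isGreatest N hN_eq hN_smul hN_add θ
  set D := dualNorm N θ with hD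
  set r := y - x ⬝ᵥ θ with hr
  have hNneg : ∀ v, 0 ≤ N v := by
    intro v
    have h0 : N 0 = 0 := (hN_eq 0).mpr rfl
    have hneg : N (-v) = N v := by simpa using hN_smul (-1) v
    have := hN_add v (-v)
    simp [h0, hneg] at this
    linarith
  have hDnonneg : 0 ≤ D := hDval ▸ abs_nonneg _
  -- key bound: |θ ⬝ᵥ v| ≤ δ * D whenever N v ≤ δ
  have hkey : ∀ v : Fin p → ℝ, N v ≤ δ → |θ ⬝ᵥ v| ≤ δ * D := by
    intro v hv
    rcases eq_or_lt_of_le hδ with hδ0 | hδpos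
    · have : N v = 0 := le_antisymm (by rw [hδ0]; exact hv) (hNneg v)
      have : v = 0 := (hN_eq v).mp this
      simp [this, ← hδ0]
    · have h1 : N (δ⁻¹ • v) ≤ 1 := by
        rw [hN_smul, abs_of_pos (inv_pos.mpr hδpos)]
        rw [inv_mul_le_iff₀ hδpos, mul_one]
        exact hv
      have h2 : |θ ⬝ᵥ (δ⁻¹ • v)| ≤ D := hub ⟨_, h1, rfl⟩
      rw [dotProduct_smul, smul_eq_mul, abs_mul, abs_of_pos (inv_pos.mpr hδpos)] at h2
      calc |θ ⬝ᵥ v| = δ * (δ⁻¹ * |θ ⬝ᵥ v|) := by field_simp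
        _ ≤ δ * D := by nlinarith
  constructor
  · -- membership: construct the worst-case perturbation
    set s : ℝ := if 0 ≤ r then 1 else -1 with hs
    set t : ℝ := if 0 ≤ θ ⬝ᵥ u₀ then 1 else -1 with ht
    refine ⟨(-(δ * s * t)) • u₀, ?_, ?_⟩
    · rw [hN_smul]
      have : |(-(δ * s * t))| = δ := by
        rw [hs, ht]
        split_ifs <;> simp [abs_of_nonneg hδ]
      rw [this]
      calc δ * N u₀ ≤ δ * 1 := by nlinarith [hNneg u₀]
        _ = δ := mul_one δ
    · have htc : t * (θ ⬝ᵥ u₀) = D := by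
        rw [hDval, ht]
        rcases le_or_gt 0 (θ ⬝ᵥ u₀) with h | h
        · simp [h, abs_of_nonneg h]
        · simp [not_le.mpr h, abs_of_neg h]
      have hexp : y - (x + (-(δ * s * t)) • u₀) ⬝ᵥ θ = r + δ * s * (t * (θ ⬝ᵥ u₀)) := by
        rw [hr, add_dotProduct, smul_dotProduct, smul_eq_mul]
        have : θ ⬝ᵥ u₀ = (u₀ : Fin p → ℝ) ⬝ᵥ θ := dotProduct_comm _ _
        rw [← this]; ring
      rw [hexp, htc]
      rcases le_or_gt 0 r with h | h
      · rw [hs, if_pos h, abs_of_nonneg h]; ring_nf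
      · rw [hs, if_neg (not_le.mpr h), abs_of_neg h]; ring_nf
  · rintro w ⟨Δx, hΔ, rfl⟩
    have h1 : |y - (x + Δx) ⬝ᵥ θ| ≤ |r| + δ * D := by
      have : y - (x + Δx) ⬝ᵥ θ = r - θ ⬝ᵥ Δx := by
        rw [hr, add_dotProduct, dotProduct_comm Δx θ]; ring
      rw [this]
      calc |r - θ ⬝ᵥ Δx| ≤ |r| + |θ ⬝ᵥ Δx| := abs_sub _ _
        _ ≤ |r| + δ * D := by linarith [hkey Δx hΔ]
    calc (y - (x + Δx) ⬝ᵥ θ) ^ 2 = |y - (x + Δx) ⬝ᵥ θ| ^ 2 := (sq_abs _).symm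
      _ ≤ (|r| + δ * D) ^ 2 := by
          have h0 : 0 ≤ |r| + δ * D := by positivity
          nlinarith [abs_nonneg (y - (x + Δx) ⬝ᵥ θ)]
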